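/- Let (a_j)_{j≥1} be real numbers in the open interval (0,1) with a_j → 1, and define automorphisms f_j of ℂ² by f_j(z, w) = (z² + a_j w, a_j z). Then the basin of attraction Ω* = {p ∈ ℂ² : f_n ∘ ⋯ ∘ f_1(p) → 0 as n → ∞} is not an open subset of ℂ² (in particular, it is not biholomorphic to ℂ²). -/

import Mathlib

open Filter Metric Set
open scoped ENNReal

noncomputable section

/-- `ℂ²` with the Euclidean norm. -/
abbrev E2 := EuclideanSpace ℂ (Fin 2)

/-- The map `f(z, w) = (z² + a w, a z)` on `ℂ²`. -/
def henon (a : ℂ) (p : E2) : E2 :=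
  (WithLp.equiv 2 (Fin 2 → ℂ)).symm ![(p 0) ^ 2 + a * p 1, a * p 0]

/-- `seqComp f n = f n ∘ ⋯ ∘ f 1` (and `seqComp f 0 = id`). -/
def seqComp (f : ℕ → E2 → E2) : ℕ → E2 → E2
  | 0 => id
  | n + 1 => f (n + 1) ∘ seqComp f n

namespace BasinAux

variable (a : ℕ → ℝ)

/-- the real orbit of (t,t) -/
def Z : ℕ → ℝ → ℝ × ℝ
  | 0, t => (t, t)
  | n + 1, t => ((Z n t).1 ^ 2 + a (n + 1) * (Z n t).2, a (n + 1) * (Z n t).1)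

/-- embed a real pair into `E2` -/
def pt2 (q : ℝ × ℝ) : E2 :=
  (WithLp.equiv 2 (Fin 2 → ℂ)).symm ![(q.1 : ℂ), (q.2 : ℂ)]

lemma pt2_apply0 (q : ℝ × ℝ) : pt2 q 0 = (q.1 : ℂ) := rfl
lemma pt2_apply1 (q : ℝ × ℝ) : pt2 q 1 = (q.2 : ℂ) := rfl

lemma norm_pt2 (q : ℝ × ℝ) : ‖pt2 q‖ = Real.sqrt (q.1 ^ 2 + q.2 ^ 2) := by
  rw [EuclideanSpace.norm_eq]
  simp [pt2, Fin.sum_univ_two, WithLp.equiv_symm_apply, PiLp.toLp_apply, Complex.norm_real, sq_abs]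

lemma henon_pt2 (c x y : ℝ) :
    henon (c : ℂ) (pt2 (x, y)) = pt2 (x ^ 2 + c * y, c * x) := by
  simp only [henon, pt2, WithLp.equiv_symm_apply]
  congr 1
  funext i
  fin_cases i <;> simp [WithLp.equiv_symm_apply, PiLp.toLp_apply] <;> push_cast <;> ring

lemma orbit_eq (t : ℝ) : ∀ n,
    seqComp (fun j => henon (a j : ℂ)) n (pt2 (t, t)) = pt2 (Z a n t) := by
  intro n
  induction n with
  | zero => rfl
  | succ n ih =>
    show henon (a (n+1) : ℂ) (seqComp (fun j => henon (a j : ℂ)) n (pt2 (t, t))) = _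
    rw [ih, show Z a n t = ((Z a n t).1, (Z a n t).2) from rfl, henon_pt2]
    rfl

end BasinAux

namespace BasinAux2
open BasinAux

variable {a : ℕ → ℝ}

lemma Z_zero (a : ℕ → ℝ) : ∀ n, Z a n 0 = (0, 0)
  | 0 => rfl
  | n + 1 => by simp [Z, Z_zero a n]

lemma Z_cont (a : ℕ → ℝ) : ∀ n, Continuous fun t => Z a n t
  | 0 => continuous_id.prodMk continuous_id
  | n + 1 => by
    have ih := Z_cont a n
    have h1 := continuous_fst.comp ih
    have h2 := continuous_snd.comp ih
    exact ((h1.pow 2).add (continuous_const.mul h2)).prodMk (continuous_const.mul h1)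

lemma Z_nonneg (hpos : ∀ j, 1 ≤ j → 0 < a j) {t : ℝ} (ht : 0 ≤ t) :
    ∀ n, 0 ≤ (Z a n t).1 ∧ 0 ≤ (Z a n t).2
  | 0 => ⟨ht, ht⟩
  | n + 1 => by
    obtain ⟨h1, h2⟩ := Z_nonneg hpos ht n
    have hA := (hpos (n + 1) (Nat.le_add_left 1 n)).le
    constructor
    · exact add_nonneg (pow_nonneg h1 2) (mul_nonneg hA h2)
    · exact mul_nonneg hA h1

lemma Z_step_ge_sq (hpos : ∀ j, 1 ≤ j → 0 < a j) {t : ℝ} (ht : 0 ≤ t) (m : ℕ) :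
    (Z a m t).1 ^ 2 ≤ (Z a (m + 1) t).1 := by
  have h2 := (Z_nonneg hpos ht m).2
  have hA := (hpos (m + 1) (Nat.le_add_left 1 m)).le
  exact le_add_of_nonneg_right (mul_nonneg hA h2)

lemma Z_escape (hpos : ∀ j, 1 ≤ j → 0 < a j) {t : ℝ} (ht : 0 ≤ t) {n : ℕ}
    (h2 : 2 < (Z a n t).1) : ∀ k, 2 < (Z a (n + k) t).1
  | 0 => h2
  | k + 1 => by
    have ih := Z_escape hpos ht h2 k
    have hs := Z_step_ge_sq hpos ht (t := t) (n + k)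
    have : (2:ℝ) < (Z a (n + k) t).1 ^ 2 := by nlinarith
    calc (2:ℝ) < (Z a (n + k) t).1 ^ 2 := this
    _ ≤ (Z a (n + k + 1) t).1 := hs


lemma Z_eventually_small (ha : ∀ j, 1 ≤ j → a j ∈ Set.Ioo (0:ℝ) 1)
    (hlim : Filter.Tendsto a Filter.atTop (nhds 1)) {t : ℝ} (ht : 0 ≤ t)
    (hb : ∀ n, (Z a n t).1 ≤ 2) {ε : ℝ} (hε : 0 < ε) :
    ∃ N, ∀ n ≥ N, (Z a n t).1 < ε := by
  have hpos : ∀ j, 1 ≤ j → 0 < a j := fun j hj => (ha j hj).1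
  set c : ℝ := min (ε ^ 3 / 3) (1 / 2) with hc
  have hc0 : 0 < c := lt_min (by positivity) (by norm_num)
  have hc1 : c ≤ 1 / 2 := min_le_right _ _
  have hc3 : 3 * c ≤ ε ^ 3 := by
    have := min_le_left (ε ^ 3 / 3) (1 / 2)
    nlinarith
  obtain ⟨N₀, hN₀⟩ : ∃ N₀, ∀ j ≥ N₀, 1 - c ≤ a j := by
    have : ∀ᶠ j in Filter.atTop, 1 - c ≤ a j :=
      hlim.eventually (eventually_ge_nhds (by linarith))
    exact this.exists_forall_of_atTop
  refine ⟨N₀ + 1, ?_⟩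
  by_contra hcon
  push_neg at hcon
  obtain ⟨n, hnN, hnε⟩ := hcon
  have key : ∀ k, (1 + c) ^ k * ε ≤ (Z a (n + 2 * k) t).1 := by
    intro k
    induction k with
    | zero => simpa using hnε
    | succ k ih =>
      set m := n + 2 * k with hm
      have hone : (1:ℝ) ≤ (1 + c) ^ k := one_le_pow₀ (by linarith : (1:ℝ) ≤ 1 + c)
      have hzm0 : 0 ≤ (Z a m t).1 := (Z_nonneg hpos ht m).1
      have hεzm : ε ≤ (Z a m t).1 := by
        calc ε = 1 * ε := (one_mul ε).symm
        _ ≤ (1 + c) ^ k * ε := by nlinarith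
        _ ≤ (Z a m t).1 := ih
      have h1 : (Z a m t).1 ^ 2 ≤ (Z a (m + 1) t).1 := Z_step_ge_sq hpos ht m
      have h1nn : 0 ≤ (Z a (m + 1) t).1 := (Z_nonneg hpos ht (m + 1)).1
      have h4 : (Z a m t).1 ^ 4 ≤ (Z a (m + 1) t).1 ^ 2 := by nlinarith
      have hε3 : ε ^ 3 * (Z a m t).1 ≤ (Z a m t).1 ^ 4 := by
        have h3 : ε ^ 3 ≤ (Z a m t).1 ^ 3 := pow_le_pow_left₀ hε.le hεzm 3
        nlinarith
      have ha1 : 1 - c ≤ a (m + 1) := hN₀ _ (by omega)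
      have ha2 : 1 - c ≤ a (m + 2) := hN₀ _ (by omega)
      have ha1p : 0 ≤ a (m + 1) := (hpos _ (by omega)).le
      have ha2p : 0 ≤ a (m + 2) := (hpos _ (by omega)).le
      have hcc : 0 ≤ 1 - c := by linarith
      have hstep : (Z a (m + 2) t).1
          = (Z a (m + 1) t).1 ^ 2 + a (m + 2) * (a (m + 1) * (Z a m t).1) := by
        show (Z a (m + 1) t).1 ^ 2 + a (m + 2) * (Z a (m + 1) t).2 = _
        simp [Z]
      have hprod : (1 - c) * ((1 - c) * (Z a m t).1)
          ≤ a (m + 2) * (a (m + 1) * (Z a m t).1) := by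
        have hi : (1 - c) * (Z a m t).1 ≤ a (m + 1) * (Z a m t).1 :=
          mul_le_mul_of_nonneg_right ha1 hzm0
        calc (1 - c) * ((1 - c) * (Z a m t).1)
            ≤ (1 - c) * (a (m + 1) * (Z a m t).1) :=
              mul_le_mul_of_nonneg_left hi hcc
        _ ≤ a (m + 2) * (a (m + 1) * (Z a m t).1) :=
              mul_le_mul_of_nonneg_right ha2 (mul_nonneg ha1p hzm0)
      have hgrow : (1 + c) * (Z a m t).1 ≤ (Z a (m + 2) t).1 := by
        have hcz : 3 * c * (Z a m t).1 ≤ ε ^ 3 * (Z a m t).1 :=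
          mul_le_mul_of_nonneg_right hc3 hzm0
        have hc2z : 0 ≤ c ^ 2 * (Z a m t).1 := mul_nonneg (sq_nonneg c) hzm0
        rw [hstep]; nlinarith [h4, hε3, hprod, hcz, hc2z]
      have : (1 + c) ^ (k + 1) * ε ≤ (1 + c) * (Z a m t).1 := by
        rw [pow_succ]
        calc (1 + c) ^ k * (1 + c) * ε = (1 + c) * ((1 + c) ^ k * ε) := by ring
        _ ≤ (1 + c) * (Z a m t).1 := by nlinarith
      have hfin := le_trans this hgrow
      simpa [hm, show n + 2 * (k + 1) = n + 2 * k + 2 by ring] using hfin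
  obtain ⟨k, hk⟩ := pow_unbounded_of_one_lt (2 / ε) (show (1:ℝ) < 1 + c by linarith)
  have h2lt : 2 < (1 + c) ^ k * ε := by
    rw [div_lt_iff₀ hε] at hk; linarith
  exact absurd (hb (n + 2 * k)) (not_le.mpr (lt_of_lt_of_le h2lt (key k)))

lemma orbit_tendsto_zero (ha : ∀ j, 1 ≤ j → a j ∈ Set.Ioo (0:ℝ) 1)
    (hlim : Filter.Tendsto a Filter.atTop (nhds 1)) {t : ℝ} (ht : 0 ≤ t)
    (hb : ∀ n, (Z a n t).1 ≤ 2) :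
    Filter.Tendsto (fun n => seqComp (fun j => henon (a j : ℂ)) n (pt2 (t, t)))
      Filter.atTop (nhds 0) := by
  have hpos : ∀ j, 1 ≤ j → 0 < a j := fun j hj => (ha j hj).1
  have hz : Filter.Tendsto (fun n => (Z a n t).1) Filter.atTop (nhds 0) := by
    rw [Metric.tendsto_atTop]
    intro ε hε
    obtain ⟨N, hN⟩ := Z_eventually_small ha hlim ht hb hε
    exact ⟨N, fun n hn => by
      rw [Real.dist_eq, sub_zero, abs_of_nonneg (Z_nonneg hpos ht n).1]
      exact hN n hn⟩
  have hw : Filter.Tendsto (fun n => (Z a n t).2) Filter.atTop (nhds 0) := by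
    rw [Metric.tendsto_atTop]
    intro ε hε
    obtain ⟨N, hN⟩ := Z_eventually_small ha hlim ht hb hε
    refine ⟨N + 1, fun n hn => ?_⟩
    obtain ⟨m, rfl⟩ : ∃ m, n = m + 1 := ⟨n - 1, by omega⟩
    rw [Real.dist_eq, sub_zero, abs_of_nonneg (Z_nonneg hpos ht (m + 1)).2]
    have hzm := (Z_nonneg hpos ht m).1
    have haw : a (m + 1) ≤ 1 := (ha (m + 1) (Nat.le_add_left 1 m)).2.le
    have : (Z a (m + 1) t).2 = a (m + 1) * (Z a m t).1 := by simp [Z]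
    rw [this]
    calc a (m + 1) * (Z a m t).1 ≤ 1 * (Z a m t).1 :=
      mul_le_mul_of_nonneg_right haw hzm
    _ = (Z a m t).1 := one_mul _
    _ < ε := hN m (by omega)
  have hsum : Filter.Tendsto (fun n => (Z a n t).1 + (Z a n t).2)
      Filter.atTop (nhds 0) := by simpa using hz.add hw
  apply squeeze_zero_norm _ hsum
  intro n
  rw [orbit_eq, norm_pt2]
  obtain ⟨h1, h2⟩ := Z_nonneg hpos ht n
  calc Real.sqrt ((Z a n t).1 ^ 2 + (Z a n t).2 ^ 2)
      ≤ Real.sqrt (((Z a n t).1 + (Z a n t).2) ^ 2) :=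
        Real.sqrt_le_sqrt (by nlinarith [mul_nonneg h1 h2])
  _ = (Z a n t).1 + (Z a n t).2 := Real.sqrt_sq (by linarith)

lemma orbit_not_tendsto (hpos : ∀ j, 1 ≤ j → 0 < a j) {t : ℝ} (ht : 0 ≤ t) {n : ℕ}
    (h2 : 2 < (Z a n t).1) :
    ¬ Filter.Tendsto (fun k => seqComp (fun j => henon (a j : ℂ)) k (pt2 (t, t)))
      Filter.atTop (nhds 0) := by
  intro h
  have hnorm := h.norm
  rw [norm_zero] at hnorm
  have hev : ∀ᶠ k in Filter.atTop,
      ‖seqComp (fun j => henon (a j : ℂ)) k (pt2 (t, t))‖ < 2 :=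
    hnorm.eventually (eventually_lt_nhds (by norm_num))
  obtain ⟨k, hk1, hk2⟩ := (hev.and (Filter.eventually_ge_atTop n)).exists
  obtain ⟨j, rfl⟩ : ∃ j, k = n + j := ⟨k - n, by omega⟩
  have hgt := Z_escape hpos ht h2 j
  rw [orbit_eq, norm_pt2] at hk1
  have hw := (Z_nonneg hpos ht (n + j)).2
  have : (Z a (n + j) t).1 ≤ Real.sqrt ((Z a (n + j) t).1 ^ 2 + (Z a (n + j) t).2 ^ 2) := by
    calc (Z a (n + j) t).1 = Real.sqrt ((Z a (n + j) t).1 ^ 2) :=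
      (Real.sqrt_sq (by linarith)).symm
    _ ≤ _ := Real.sqrt_le_sqrt (by nlinarith)
  linarith

lemma dist_pt2 (x y : ℝ) : dist (pt2 (x, x)) (pt2 (y, y)) = Real.sqrt 2 * |x - y| := by
  have hxy : dist (x:ℂ) (y:ℂ) = |x - y| := by
    rw [Complex.dist_eq, ← Complex.ofReal_sub, Complex.norm_real, Real.norm_eq_abs]
  rw [EuclideanSpace.dist_eq, Fin.sum_univ_two, pt2_apply0, pt2_apply0,
    pt2_apply1, pt2_apply1, hxy,
    show |x - y| ^ 2 + |x - y| ^ 2 = 2 * |x - y| ^ 2 by ring,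
    Real.sqrt_mul (by norm_num), Real.sqrt_sq (abs_nonneg _)]

end BasinAux2


open BasinAux BasinAux2 in
/-- if `a_j ∈ (0,1)` are real with `a_j → 1` and
`f_j(z,w) = (z² + a_j w, a_j z)`, then the basin of attraction
`Ω* = {p : f_n ∘ ⋯ ∘ f_1(p) → 0}` is not open. -/
theorem basin_not_open_of_slowly_attracting (a : ℕ → ℝ)
    (ha : ∀ j, 1 ≤ j → a j ∈ Set.Ioo (0 : ℝ) 1)
    (hlim : Tendsto a atTop (nhds 1)) :
    ¬ IsOpen {p : E2 |
        Tendsto (fun n => seqComp (fun j => henon (a j : ℂ)) n p) atTop (nhds 0)} := by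

  intro hopen
  have hpos : ∀ j, 1 ≤ j → 0 < a j := fun j hj => (ha j hj).1
  set E : Set ℝ := {t | 0 < t ∧ ∃ n, 2 < (Z a n t).1} with hE
  have hE10 : (10:ℝ) ∈ E := by
    refine ⟨by norm_num, 1, ?_⟩
    have h1 := hpos 1 le_rfl
    show (2:ℝ) < (10:ℝ) ^ 2 + a 1 * 10
    nlinarith
  have hEne : E.Nonempty := ⟨10, hE10⟩
  have hbdd : BddBelow E := ⟨0, fun t ht => ht.1.le⟩
  set τ := sInf E with hτ
  have hτ0 : 0 ≤ τ := le_csInf hEne (fun t ht => ht.1.le)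
  have hτ2 : ∀ n, (Z a n τ).1 ≤ 2 := by
    by_contra hc
    push_neg at hc
    obtain ⟨n, hn⟩ := hc
    have hτpos : 0 < τ := by
      rcases hτ0.lt_or_eq with h | h
      · exact h
      · exfalso
        rw [← h, Z_zero] at hn
        norm_num at hn
    have hcont : Continuous fun s => (Z a n s).1 := continuous_fst.comp (Z_cont a n)
    have hev : ∀ᶠ s in nhds τ, 2 < (Z a n s).1 :=
      (hcont.tendsto τ).eventually (eventually_gt_nhds hn)
    obtain ⟨δ, hδpos, hδ⟩ := Metric.eventually_nhds_iff.1 hev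
    set s := max (τ / 2) (τ - δ / 2) with hs
    have hs_pos : 0 < s := lt_of_lt_of_le (by linarith) (le_max_left _ _)
    have hs_lt : s < τ := max_lt (by linarith) (by linarith)
    have hs_dist : dist s τ < δ := by
      rw [Real.dist_eq, abs_of_nonpos (by linarith)]
      have := le_max_right (τ / 2) (τ - δ / 2)
      linarith
    have hsE : s ∈ E := ⟨hs_pos, n, hδ hs_dist⟩
    exact absurd (csInf_le hbdd hsE) (not_le.mpr hs_lt)
  have hmem : pt2 (τ, τ) ∈ {p : E2 |
      Tendsto (fun n => seqComp (fun j => henon (a j : ℂ)) n p) atTop (nhds 0)} :=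
    orbit_tendsto_zero ha hlim hτ0 hτ2
  obtain ⟨ρ, hρpos, hball⟩ := Metric.isOpen_iff.1 hopen _ hmem
  obtain ⟨t, htE, htlt⟩ : ∃ t ∈ E, t < τ + ρ / 2 := by
    simpa [← hτ] using Real.lt_sInf_add_pos hEne (half_pos hρpos)
  have htτ : τ ≤ t := csInf_le hbdd htE
  have hdist : dist (pt2 (t, t)) (pt2 (τ, τ)) < ρ := by
    rw [dist_pt2, abs_of_nonneg (by linarith)]
    have hsqrt2 : Real.sqrt 2 ≤ 2 := by
      nlinarith [Real.sq_sqrt (show (0:ℝ) ≤ 2 by norm_num), Real.sqrt_nonneg 2]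
    nlinarith [Real.sqrt_nonneg 2]
  have hmem2 := hball hdist
  obtain ⟨htpos, n, hn⟩ := htE
  exact orbit_not_tendsto hpos htpos.le hn hmem2


end
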